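/- Within the group G of maps (z', z_n) ↦ (Uz' + a, z_n + 2⟨Uz', a⟩ + |a|² + iα) (U ∈ U_{n-1}, a ∈ ℂ^{n-1}, α ∈ ℝ), the centralizer of the subgroup with U ∈ SU_{n-1} consists exactly of the maps (z', z_n) ↦ (z', z_n + iα), α ∈ ℝ. Assume n ≥ 3. -/

import Mathlib

/-- The map `(z',z_n) ↦ (Uz'+a, z_n + 2⟨Uz',a⟩ + |a|² + iα)` (element of
`U_{n-1} ⋉ N` acting on `ℂ^{n-1} × ℂ`). -/
noncomputable def heisAut (m : ℕ) (U : Matrix (Fin m) (Fin m) ℂ)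
    (a : EuclideanSpace ℂ (Fin m)) (α : ℝ) :
    EuclideanSpace ℂ (Fin m) × ℂ → EuclideanSpace ℂ (Fin m) × ℂ :=
  fun p =>
    ((WithLp.toLp 2 (fun i => U.mulVec p.1 i + a i) : EuclideanSpace ℂ (Fin m)),
      p.2 + 2 * (inner ℂ a (WithLp.toLp 2 (fun i => U.mulVec p.1 i) :
          EuclideanSpace ℂ (Fin m)) : ℂ) + (‖a‖ : ℂ) ^ 2 + Complex.I * α)

theorem stmt_9_aux (m : ℕ) (U : Matrix (Fin m) (Fin m) ℂ)
    (a : EuclideanSpace ℂ (Fin m)) (α : ℝ)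
    (h : ∀ V ∈ Matrix.unitaryGroup (Fin m) ℂ, V.det = 1 →
        ∀ (b : EuclideanSpace ℂ (Fin m)) (β : ℝ),
          heisAut m U a α ∘ heisAut m V b β
            = heisAut m V b β ∘ heisAut m U a α) :
    ∃ α' : ℝ, heisAut m U a α
        = fun p : EuclideanSpace ℂ (Fin m) × ℂ =>
            (p.1, p.2 + Complex.I * α') := by
  have key : ∀ (b : EuclideanSpace ℂ (Fin m)) (p : EuclideanSpace ℂ (Fin m) × ℂ),
      heisAut m U a α (heisAut m 1 b 0 p) = heisAut m 1 b 0 (heisAut m U a α p) :=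
    fun b p => congrFun (h 1 (one_mem _) Matrix.det_one b 0) p
  -- first component: U b = b
  have hUb : ∀ b : EuclideanSpace ℂ (Fin m), U.mulVec b = b := by
    intro b
    have h1 := congrArg Prod.fst (key b (0, 0))
    simp only [heisAut, Matrix.one_mulVec] at h1
    have h2 := congrFun (congrArg WithLp.ofLp h1)
    funext i
    have h3 := h2 i
    simp only at h3
    have e1 : (fun j => (0 : EuclideanSpace ℂ (Fin m)) j + b j) = b := by
      funext j; simp [EuclideanSpace]
    rw [e1] at h3
    have : U.mulVec b i + a i = U.mulVec (0:EuclideanSpace ℂ (Fin m)) i + a i + b i := h3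
    have hz : U.mulVec (0:EuclideanSpace ℂ (Fin m)) = 0 := by
      simp [Matrix.mulVec_zero]
    rw [hz] at this
    have h0 : (0 : Fin m → ℂ) i = 0 := rfl
    rw [h0] at this
    linear_combination this
  have hinner : ∀ b : EuclideanSpace ℂ (Fin m), (inner ℂ a b : ℂ) = inner ℂ b a := by
    intro b
    have h1 := congrArg Prod.snd (key b (0, 0))
    have e1 : (fun j => (0 : EuclideanSpace ℂ (Fin m)) j + b j) = b := by
      funext j; exact zero_add _
    have e1a : (fun j => (0 : EuclideanSpace ℂ (Fin m)) j + a j) = a := by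
      funext j; exact zero_add _
    have e0 : (fun j => (0 : EuclideanSpace ℂ (Fin m)) j) = (0 : EuclideanSpace ℂ (Fin m)) := rfl
    have eb : (fun j => b j) = b := rfl
    have ea : (fun j => a j) = a := rfl
    simp only [heisAut, Matrix.one_mulVec, Matrix.mulVec_zero, e1, e1a, e0, eb, ea, hUb, WithLp.toLp_ofLp,
      inner_zero_right, Complex.ofReal_zero, mul_zero, zero_add, add_zero] at h1
    linear_combination h1 / 2
  have ha : a = 0 := by
    have h1 := hinner (Complex.I • a)
    rw [inner_smul_right, inner_smul_left, Complex.conj_I] at h1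
    have h2 : (inner ℂ a a : ℂ) = 0 := by
      have h3 : (2 * Complex.I) * (inner ℂ a a : ℂ) = 0 := by linear_combination h1
      rcases mul_eq_zero.mp h3 with h4 | h4
      · exact absurd h4 (by simp [Complex.I_ne_zero])
      · exact h4
    exact inner_self_eq_zero.mp h2
  subst ha
  refine ⟨α, funext fun p => ?_⟩
  have e : (fun i => U.mulVec p.1 i + (0 : EuclideanSpace ℂ (Fin m)) i) = p.1 := by
    funext i; rw [hUb]; exact add_zero _
  have eb : (fun i => U.mulVec p.1 i) = p.1 := by
    funext i; rw [hUb]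
  simp [heisAut, e, eb, inner_zero_left]

/-- For `n ≥ 3`, within the group `G` of maps
`(z',z_n) ↦ (Uz'+a, z_n + 2⟨Uz',a⟩ + |a|² + iα)` with `U ∈ U_{n-1}`, an element
centralizes the subgroup `SU_{n-1} ⋉ N` (those with `det U = 1`) if and only if
it is of the form `(z',z_n) ↦ (z', z_n + iα')` for some `α' ∈ ℝ`. -/
theorem stmt_9 (n : ℕ) (hn : 3 ≤ n)
    (U : Matrix (Fin (n - 1)) (Fin (n - 1)) ℂ)
    (hU : U ∈ Matrix.unitaryGroup (Fin (n - 1)) ℂ)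
    (a : EuclideanSpace ℂ (Fin (n - 1))) (α : ℝ) :
    (∀ V ∈ Matrix.unitaryGroup (Fin (n - 1)) ℂ, V.det = 1 →
        ∀ (b : EuclideanSpace ℂ (Fin (n - 1))) (β : ℝ),
          heisAut (n - 1) U a α ∘ heisAut (n - 1) V b β
            = heisAut (n - 1) V b β ∘ heisAut (n - 1) U a α) ↔
      ∃ α' : ℝ, heisAut (n - 1) U a α
        = fun p : EuclideanSpace ℂ (Fin (n - 1)) × ℂ =>
            (p.1, p.2 + Complex.I * α') := by
  constructor
  · exact stmt_9_aux (n - 1) U a α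
  · rintro ⟨α', hEq⟩ V hV hdet b β
    funext p
    simp only [Function.comp_apply, hEq, heisAut, Prod.mk.injEq]
    exact ⟨trivial, by ring⟩
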